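/- For every k with 1 ≤ k ≤ m+n−1, the operator T on V ⊗ V commutes with ρ_2(f_k) = F_k ⊗ Id + S^{p(k)}D_k ⊗ F_k: in End_K(V ⊗ V) one has T ∘ ρ_2(f_k) = ρ_2(f_k) ∘ T. -/
import Mathlib


set_option synthInstance.maxHeartbeats 1000000
set_option maxHeartbeats 1000000

open scoped BigOperators Kronecker

section CommonDefs

variable {R : Type*} [CommRing R]

/-- ℤ₂-degree of the basis vector `v_{k+1}` (0-based index `k`): `0` if `k < m`, else `1`. -/
def deg (m : ℕ) {N : ℕ} (k : Fin N) : ℕ := if (k : ℕ) < m then 0 else 1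

/-- The sign `(−1)^{|v_k||v_l|}`. -/
def sgn (R : Type*) [CommRing R] (m : ℕ) {N : ℕ} (k l : Fin N) : R :=
  (-1 : R) ^ (deg m k * deg m l)

/-- Entries (row = input vector) of the operator `T` on `V ⊗ V`, where `x` plays the
role of `q` and `xinv` that of `q⁻¹`:  `T(v_k ⊗ v_k) = q·v_k ⊗ v_k` if `k ≤ m`,
`T(v_k ⊗ v_k) = −q⁻¹·v_k ⊗ v_k` if `k > m`,
`T(v_k ⊗ v_l) = (−1)^{|v_k||v_l|} v_l ⊗ v_k + (q−q⁻¹) v_k ⊗ v_l` if `k < l`, and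
`T(v_k ⊗ v_l) = (−1)^{|v_k||v_l|} v_l ⊗ v_k` if `k > l`. -/
def Tent (x xinv : R) (m : ℕ) {N : ℕ} (p p' : Fin N × Fin N) : R :=
  if p.1 = p.2 then (if (p.1 : ℕ) < m then x else -xinv) * (if p' = p then 1 else 0)
  else if (p.1 : ℕ) < (p.2 : ℕ) then
    sgn R m p.1 p.2 * (if p' = (p.2, p.1) then 1 else 0)
      + (x - xinv) * (if p' = p then 1 else 0)
  else sgn R m p.1 p.2 * (if p' = (p.2, p.1) then 1 else 0)

/-- Entries of the signed swap `P(v_k ⊗ v_l) = (−1)^{|v_k||v_l|} v_l ⊗ v_k`. -/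
def Pent (R : Type*) [CommRing R] (m : ℕ) {N : ℕ} (p p' : Fin N × Fin N) : R :=
  sgn R m p.1 p.2 * (if p' = (p.2, p.1) then 1 else 0)

/-- The operator `Id^{⊗ i} ⊗ E ⊗ Id^{⊗ (r−i−2)}` on `V^{⊗ r}` obtained from a two-site
operator `E` acting on the (0-based) tensor positions `i` and `i+1`. -/
def twoSiteOp {N : ℕ} (E : Fin N × Fin N → Fin N × Fin N → R) (r i : ℕ) (h : i + 1 < r) :
    Matrix (Fin r → Fin N) (Fin r → Fin N) R := fun a b =>
  E (a ⟨i, Nat.lt_of_succ_lt h⟩, a ⟨i + 1, h⟩) (b ⟨i, Nat.lt_of_succ_lt h⟩, b ⟨i + 1, h⟩) *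
    ∏ j ∈ Finset.univ \ ({⟨i, Nat.lt_of_succ_lt h⟩, ⟨i + 1, h⟩} : Finset (Fin r)),
      (if a j = b j then (1 : R) else 0)

/-- The Hecke operator `T_{i+1} = Id^{⊗ i} ⊗ T ⊗ Id^{⊗ (r−i−2)}` on `V^{⊗ r}`
(here `i` is the 0-based position of the first tensor factor it acts on). -/
def heckeOp (x xinv : R) (m : ℕ) {N : ℕ} (r i : ℕ) (h : i + 1 < r) :
    Matrix (Fin r → Fin N) (Fin r → Fin N) R :=
  twoSiteOp (Tent x xinv m) r i h

/-- The signed swap operator `P_{i+1} = Id^{⊗ i} ⊗ P ⊗ Id^{⊗ (r−i−2)}` on `V^{⊗ r}`. -/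
def swapOp (R : Type*) [CommRing R] (m : ℕ) {N : ℕ} (r i : ℕ) (h : i + 1 < r) :
    Matrix (Fin r → Fin N) (Fin r → Fin N) R :=
  twoSiteOp (Pent R m) r i h

/-- The parity operator `S v_j = (−1)^{|v_j|} v_j`. -/
def Smat (R : Type*) [CommRing R] (m : ℕ) {N : ℕ} : Matrix (Fin N) (Fin N) R :=
  fun a b => if a = b then (-1 : R) ^ deg m a else 0

/-- The diagonal operator `Q_b v_j = q^{δ_{bj}} v_j` (`x` playing the role of `q`, or of
`q⁻¹` for the inverse operator). -/
def Qmat (x : R) {N : ℕ} (b0 : Fin N) : Matrix (Fin N) (Fin N) R :=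
  fun a b => if a = b then (if a = b0 then x else 1) else 0

/-- `E_k v_{k+1} = v_k`, `E_k v_j = 0` otherwise (0-based `k`; row = input). -/
def Emat (R : Type*) [CommRing R] {N : ℕ} (k : ℕ) : Matrix (Fin N) (Fin N) R :=
  fun a b => if (a : ℕ) = k + 1 ∧ (b : ℕ) = k then 1 else 0

/-- `F_k v_k = v_{k+1}`, `F_k v_j = 0` otherwise (0-based `k`; row = input). -/
def Fmat (R : Type*) [CommRing R] {N : ℕ} (k : ℕ) : Matrix (Fin N) (Fin N) R :=
  fun a b => if (a : ℕ) = k ∧ (b : ℕ) = k + 1 then 1 else 0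

/-- The diagonal operator `D_k v_j = q^{s(k)δ_{kj} − s(k+1)δ_{k+1,j}} v_j`
(0-based `k`, so `s(k) = 1` iff `k < m`, and `s(k) = −1` otherwise). -/
def Dmat (x xinv : R) (m : ℕ) {N : ℕ} (k : ℕ) : Matrix (Fin N) (Fin N) R :=
  fun a b => if a = b then
    (if (a : ℕ) = k then (if k < m then x else xinv)
     else if (a : ℕ) = k + 1 then (if k + 1 < m then xinv else x) else 1)
  else 0

/-- The inverse `D_k⁻¹` of `Dmat` (obtained by exchanging `q` and `q⁻¹`). -/
def Dinvmat (x xinv : R) (m : ℕ) {N : ℕ} (k : ℕ) : Matrix (Fin N) (Fin N) R :=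
  Dmat xinv x m k

/-- `S^{p(k)}`, where `p(k) = 1` if the 0-based `k` satisfies `k + 1 = m` (the odd simple
root) and `p(k) = 0` otherwise. -/
def SPmat (R : Type*) [CommRing R] (m : ℕ) {N : ℕ} (k : ℕ) : Matrix (Fin N) (Fin N) R :=
  if k + 1 = m then Smat R m else 1

/-- Kronecker (tensor) product of `r` one-site operators, as a matrix on `V^{⊗ r}`. -/
def kron {N r : ℕ} (M : Fin r → Matrix (Fin N) (Fin N) R) :
    Matrix (Fin r → Fin N) (Fin r → Fin N) R :=
  fun a b => ∏ j, M j (a j) (b j)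

/-- `ρ_r(σ) = S^{⊗ r}`. -/
def rhoSigma (R : Type*) [CommRing R] (m : ℕ) {N : ℕ} (r : ℕ) :
    Matrix (Fin r → Fin N) (Fin r → Fin N) R :=
  kron fun _ => Smat R m

/-- `ρ_r(q^{δ_b}) = Q_b^{⊗ r}` (and its inverse, substituting `q⁻¹` for `x`). -/
def rhoQ (x : R) {N : ℕ} (r : ℕ) (b0 : Fin N) :
    Matrix (Fin r → Fin N) (Fin r → Fin N) R :=
  kron fun _ => Qmat x b0

/-- `ρ_r(e_k) = Σ_{j=1}^{r} (S^{p(k)})^{⊗(j−1)} ⊗ E_k ⊗ (D_k^{−1})^{⊗(r−j)}`. -/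
def rhoE (x xinv : R) (m : ℕ) {N : ℕ} (r : ℕ) (k : ℕ) :
    Matrix (Fin r → Fin N) (Fin r → Fin N) R :=
  ∑ p : Fin r, kron fun j =>
    if j < p then SPmat R m k else if j = p then Emat R k else Dinvmat x xinv m k

/-- `ρ_r(f_k) = Σ_{j=1}^{r} (S^{p(k)}D_k)^{⊗(j−1)} ⊗ F_k ⊗ Id^{⊗(r−j)}`. -/
def rhoF (x xinv : R) (m : ℕ) {N : ℕ} (r : ℕ) (k : ℕ) :
    Matrix (Fin r → Fin N) (Fin r → Fin N) R :=
  ∑ p : Fin r, kron fun j =>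
    if j < p then SPmat R m k * Dmat x xinv m k else if j = p then Fmat R k else 1

/-- The generators `T_1, …, T_{r−1}` of the image of the sign `q`-permutation
representation of the Iwahori–Hecke algebra on `V^{⊗ r}`. -/
def heckeGens (x xinv : R) (m : ℕ) {N : ℕ} (r : ℕ) :
    Set (Matrix (Fin r → Fin N) (Fin r → Fin N) R) :=
  {M | ∃ (i : ℕ) (h : i + 1 < r), M = heckeOp x xinv m r i h}

/-- The signed-swap generators `P_1, …, P_{r−1}` (the `q → 1` specialization). -/
def swapGens (R : Type*) [CommRing R] (m : ℕ) {N : ℕ} (r : ℕ) :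
    Set (Matrix (Fin r → Fin N) (Fin r → Fin N) R) :=
  {M | ∃ (i : ℕ) (h : i + 1 < r), M = swapOp R m r i h}

/-- The generators `ρ_r(σ)`, `ρ_r(q^{± δ_b})` (`1 ≤ b ≤ N`), `ρ_r(e_k)`, `ρ_r(f_k)`
(`1 ≤ k ≤ N−1`) of the image of the vector representation of `U_q^σ(gl(m,n))`. -/
def quantumGens (x xinv : R) (m : ℕ) {N : ℕ} (r : ℕ) :
    Set (Matrix (Fin r → Fin N) (Fin r → Fin N) R) :=
  {rhoSigma R m r} ∪ (Set.range fun b : Fin N => rhoQ x r b)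
    ∪ (Set.range fun b : Fin N => rhoQ xinv r b)
    ∪ (Set.range fun k : Fin (N - 1) => rhoE x xinv m r (k : ℕ))
    ∪ (Set.range fun k : Fin (N - 1) => rhoF x xinv m r (k : ℕ))

end CommonDefs

/-- The base field `K = ℚ(q)` of rational functions over `ℚ`. -/
abbrev 𝕂 : Type := RatFunc ℚ

/-- The indeterminate `q` of `K = ℚ(q)`. -/
noncomputable def q : 𝕂 := RatFunc.X

/-- The operator `T` on `V ⊗ V` as a matrix indexed by pairs. -/
noncomputable def T2 (m : ℕ) {N : ℕ} : Matrix (Fin N × Fin N) (Fin N × Fin N) 𝕂 :=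
  fun p p' => Tent q q⁻¹ m p p'


namespace TCFAux

variable {F : Type*} [Field F]

def dg (M a : ℕ) : ℕ := if a < M then 0 else 1

noncomputable def t1' (x : F) (M : ℕ) (a b : ℕ) : F :=
  if a = b then (if a < M then x else -x⁻¹) else if a < b then x - x⁻¹ else 0

def t2' (F : Type*) [Field F] (M : ℕ) (a b : ℕ) : F :=
  if a = b then 0 else (-1 : F) ^ (dg M a * dg M b)

noncomputable def g' (x : F) (M KK : ℕ) (a : ℕ) : F :=
  (if KK + 1 = M then (-1 : F) ^ dg M a else 1) *
    (if a = KK then (if KK < M then x else x⁻¹)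
     else if a = KK + 1 then (if KK + 1 < M then x⁻¹ else x) else 1)

noncomputable def Aent' (x : F) (M KK a b c d : ℕ) : F :=
  (if a = KK ∧ c = KK + 1 ∧ b = d then 1 else 0)
    + g' x M KK a * (if a = c ∧ b = KK ∧ d = KK + 1 then 1 else 0)

set_option maxHeartbeats 3000000 in
lemma key (x : F) (hx : x ≠ 0) (M KK a b c d : ℕ) :
    t1' x M a b * Aent' x M KK a b c d + t2' F M a b * Aent' x M KK b a c d
      = Aent' x M KK a b c d * t1' x M c d + Aent' x M KK a b d c * t2' F M d c := by
  have hinv : x * x⁻¹ = 1 := mul_inv_cancel₀ hx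
  by_cases h1 : a = KK <;> by_cases h2 : b = KK <;>
    by_cases h3 : c = KK + 1 <;> by_cases h4 : d = KK + 1 <;>
    simp only [Aent', t1', t2', g', dg, h1, h2, h3, h4, left_eq_add,
      add_eq_left, Nat.add_eq_zero, one_ne_zero, and_false, false_and, and_true,
      true_and, if_false, if_true, lt_self_iff_false, lt_add_iff_pos_right, Nat.lt_one_iff,
      Nat.lt_irrefl, zero_lt_one, if_pos, mul_one, mul_zero, one_mul, zero_mul,
      add_zero, zero_add, eq_self_iff_true, Nat.succ_ne_self, ite_false, ite_true,
      false_or, or_false] <;>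
    split_ifs <;>
    first
      | rfl
      | ring1
      | (exfalso; omega)
      | linear_combination hinv
      | (field_simp; try ring1)

set_option maxHeartbeats 3000000 in
lemma TentRow (m : ℕ) {N : ℕ} (pa pb ca cb : Fin N) :
    Tent q q⁻¹ m (pa, pb) (ca, cb)
      = t1' q m (pa : ℕ) (pb : ℕ) * (if (ca, cb) = (pa, pb) then 1 else 0)
        + t2' 𝕂 m (pa : ℕ) (pb : ℕ) * (if (ca, cb) = (pb, pa) then 1 else 0) := by
  simp only [Tent, t1', t2', sgn, deg, dg, Prod.mk.injEq, Fin.ext_iff, ite_and]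
  split_ifs <;> first | ring1 | (exfalso; omega)

lemma t2'_comm (M a b : ℕ) : t2' F M a b = t2' F M b a := by
  unfold t2'
  split_ifs <;> first | ring1 | (exfalso; omega) | (rw [Nat.mul_comm])

lemma TentCol (m : ℕ) {N : ℕ} (pa pb ca cb : Fin N) :
    Tent q q⁻¹ m (pa, pb) (ca, cb)
      = t1' q m (ca : ℕ) (cb : ℕ) * (if (pa, pb) = (ca, cb) then 1 else 0)
        + t2' 𝕂 m (cb : ℕ) (ca : ℕ) * (if (pa, pb) = (cb, ca) then 1 else 0) := by
  rw [TentRow]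
  by_cases h1 : pa = ca <;> by_cases h2 : pb = cb <;>
    by_cases h3 : pa = cb <;> by_cases h4 : pb = ca <;>
    (try subst h1) <;> (try subst h2) <;> (try subst h3) <;> (try subst h4) <;>
    simp_all [Prod.mk.injEq, t2'_comm] <;> split_ifs <;> simp_all

lemma mul_diag {N : ℕ} (A B : Matrix (Fin N) (Fin N) 𝕂)
    (hB : ∀ x c : Fin N, x ≠ c → B x c = 0) (a c : Fin N) :
    (A * B) a c = A a c * B c c := by
  rw [Matrix.mul_apply]
  exact Finset.sum_eq_single c (fun x _ hx => by rw [hB x c hx, mul_zero])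
    (fun h => absurd (Finset.mem_univ c) h)

lemma SPD (m kk : ℕ) {N : ℕ} (a c : Fin N) :
    (SPmat 𝕂 m (N := N) kk * Dmat q q⁻¹ m (N := N) kk) a c
      = if a = c then g' q m kk (a : ℕ) else 0 := by
  rw [mul_diag _ _ (fun x c hxc => by simp [Dmat, hxc])]
  by_cases h : kk + 1 = m <;>
    simp only [SPmat, h, if_true, if_false, Matrix.one_apply, Smat, Dmat, g', dg, deg,
      ite_mul, one_mul, zero_mul, Fin.ext_iff] <;>
    split_ifs <;> first | ring1 | (exfalso; omega)

set_option maxHeartbeats 3000000 in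
lemma Aent_eq (m kk : ℕ) {N : ℕ} (a b c d : Fin N) :
    (Fmat 𝕂 (N := N) kk ⊗ₖ (1 : Matrix (Fin N) (Fin N) 𝕂)
        + (SPmat 𝕂 m (N := N) kk * Dmat q q⁻¹ m (N := N) kk) ⊗ₖ Fmat 𝕂 (N := N) kk) (a, b) (c, d)
      = Aent' q m kk (a : ℕ) (b : ℕ) (c : ℕ) (d : ℕ) := by
  simp only [Matrix.add_apply, Matrix.kroneckerMap_apply, SPD, Fmat, Matrix.one_apply,
    Aent', Fin.ext_iff, ite_and, ite_mul, mul_ite, one_mul, mul_one, zero_mul, mul_zero]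
  split_ifs <;> first | ring1 | (exfalso; omega)

set_option maxHeartbeats 3000000 in
lemma mulT_left (m kk : ℕ) {N : ℕ}
    (A : Matrix (Fin N × Fin N) (Fin N × Fin N) 𝕂) (pa pb : Fin N) (r : Fin N × Fin N) :
    (T2 m (N := N) * A) (pa, pb) r
      = t1' q m (pa : ℕ) (pb : ℕ) * A (pa, pb) r
        + t2' 𝕂 m (pa : ℕ) (pb : ℕ) * A (pb, pa) r := by
  rw [Matrix.mul_apply]
  have : ∀ p' : Fin N × Fin N, T2 m (N := N) (pa, pb) p' * A p' r
      = t1' q m (pa : ℕ) (pb : ℕ) * (if p' = (pa, pb) then A p' r else 0)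
        + t2' 𝕂 m (pa : ℕ) (pb : ℕ) * (if p' = (pb, pa) then A p' r else 0) := by
    intro p'
    rw [show (T2 m (N := N) (pa, pb) p' : 𝕂) = Tent q q⁻¹ m (pa, pb) p' from rfl,
      show p' = (p'.1, p'.2) from rfl, TentRow]
    split_ifs <;> ring1
  simp only [this, Finset.sum_add_distrib, ← Finset.mul_sum, Finset.sum_ite_eq',
    Finset.mem_univ, if_true]

lemma mulT_right (m kk : ℕ) {N : ℕ}
    (A : Matrix (Fin N × Fin N) (Fin N × Fin N) 𝕂) (p : Fin N × Fin N) (ca cb : Fin N) :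
    (A * T2 m (N := N)) p (ca, cb)
      = A p (ca, cb) * t1' q m (ca : ℕ) (cb : ℕ)
        + A p (cb, ca) * t2' 𝕂 m (cb : ℕ) (ca : ℕ) := by
  rw [Matrix.mul_apply]
  have : ∀ p' : Fin N × Fin N, A p p' * T2 m (N := N) p' (ca, cb)
      = (if p' = (ca, cb) then A p p' else 0) * t1' q m (ca : ℕ) (cb : ℕ)
        + (if p' = (cb, ca) then A p p' else 0) * t2' 𝕂 m (cb : ℕ) (ca : ℕ) := by
    intro p'
    rw [show (T2 m (N := N) p' (ca, cb) : 𝕂) = Tent q q⁻¹ m p' (ca, cb) from rfl,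
      show p' = (p'.1, p'.2) from rfl, TentCol]
    split_ifs <;> ring1
  simp only [this, Finset.sum_add_distrib, ← Finset.sum_mul, Finset.sum_ite_eq',
    Finset.mem_univ, if_true]

end TCFAux

/-- For every `k` with `1 ≤ k ≤ m+n−1`, the operator `T` on `V ⊗ V`
commutes with `ρ_2(f_k) = F_k ⊗ Id + S^{p(k)}D_k ⊗ F_k`. -/
theorem T_commutes_with_rho2_f (m n : ℕ) (hm : 1 ≤ m) (hn : 1 ≤ n)
    (k : ℕ) (hk1 : 1 ≤ k) (hk2 : k ≤ m + n - 1) :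
    T2 m (N := m + n)
        * (Fmat 𝕂 (N := m + n) (k - 1) ⊗ₖ (1 : Matrix (Fin (m + n)) (Fin (m + n)) 𝕂)
            + (SPmat 𝕂 m (N := m + n) (k - 1) * Dmat q q⁻¹ m (N := m + n) (k - 1))
                ⊗ₖ Fmat 𝕂 (N := m + n) (k - 1))
      = (Fmat 𝕂 (N := m + n) (k - 1) ⊗ₖ (1 : Matrix (Fin (m + n)) (Fin (m + n)) 𝕂)
            + (SPmat 𝕂 m (N := m + n) (k - 1) * Dmat q q⁻¹ m (N := m + n) (k - 1))
                ⊗ₖ Fmat 𝕂 (N := m + n) (k - 1))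
        * T2 m := by
  classical
  have hq : (q : 𝕂) ≠ 0 := RatFunc.X_ne_zero
  ext p r
  obtain ⟨a, b⟩ := p
  obtain ⟨c, d⟩ := r
  rw [TCFAux.mulT_left m (k-1), TCFAux.mulT_right m (k-1)]
  simp only [TCFAux.Aent_eq m (k-1)]
  exact TCFAux.key q hq m (k-1) a b c d
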